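/- Conjugate symmetry of the full propagator: if B satisfies B(−s_f, −s_i) = conj(B(s_i, s_f)) for all s_i ≤ s_f, H_s is Hermitian, W_s is Hermitian, and O_s is Hermitian, then each term of the Dyson series for G(s_i, s_f), namely i^m ∫_{s_i≤s≤s_f} (−1)^{#{s<0}} U^{(0)}(s_i, s, s_f) L_b(s) ds, satisfies (term for (−s_f, −s_i)) = (term for (s_i, s_f))^†. In particular, the truncated full propagator satisfies G(−s_f, −s_i) = G(s_i, s_f)^†. -/

import Mathlib

open MeasureTheory
open scoped Matrix

/-- A perfect pairing of `{1,...,m}`. -/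
def IsPairing {m : ℕ} (P : Finset (Fin m × Fin m)) : Prop :=
  (∀ p ∈ P, p.1 < p.2) ∧ ∀ x : Fin m, ∃! p, p ∈ P ∧ (x = p.1 ∨ x = p.2)

open scoped Classical in
/-- The set `Q(s_1,...,s_m)` of perfect pairings of indices. -/
noncomputable def pairings (m : ℕ) : Finset (Finset (Fin m × Fin m)) :=
  Finset.univ.filter IsPairing

/-- The bath influence functional (Wick pairing sum). -/
noncomputable def Lb {m : ℕ} (B : ℝ → ℝ → ℂ) (s : Fin m → ℝ) : ℂ :=
  ∑ P ∈ pairings m, ∏ p ∈ P, B (s p.1) (s p.2)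

/-- The bare system propagator `G_s^{(0)}(s_i,s_f)`. -/
noncomputable def Gs0 (Hs Os : Matrix (Fin 2) (Fin 2) ℂ) (si sf : ℝ) :
    Matrix (Fin 2) (Fin 2) ℂ :=
  if sf < 0 then NormedSpace.exp ((-Complex.I * ((sf : ℂ) - si)) • Hs)
  else if 0 ≤ si then NormedSpace.exp ((-Complex.I * ((si : ℂ) - sf)) • Hs)
  else NormedSpace.exp ((Complex.I * sf) • Hs) * Os *
    NormedSpace.exp ((Complex.I * si) • Hs)

/-- `𝒰^{(0)}(lo, s_1,...,s_m, hi) = G_s^{(0)}(s_m,hi) W_s ⋯ W_s G_s^{(0)}(lo,s_1)`. -/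
noncomputable def U0 (Hs Ws Os : Matrix (Fin 2) (Fin 2) ℂ) :
    List ℝ → ℝ → ℝ → Matrix (Fin 2) (Fin 2) ℂ
  | [], lo, hi => Gs0 Hs Os lo hi
  | x :: rest, lo, hi => U0 Hs Ws Os rest x hi * Ws * Gs0 Hs Os lo x

/-- The ordered simplex `{a ≤ s_1 ≤ ... ≤ s_m ≤ b}`. -/
def simplexSet (m : ℕ) (a b : ℝ) : Set (Fin m → ℝ) :=
  {s | Monotone s ∧ ∀ i, a ≤ s i ∧ s i ≤ b}

/-- The number of negative components of `s`. -/
noncomputable def negCount {m : ℕ} (s : Fin m → ℝ) : ℕ :=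
  (Finset.univ.filter fun i => s i < 0).card

/-- The `m`-th term of the Dyson series for the full propagator `G(s_i,s_f)`:
`i^m ∫_{s_i ≤ s ≤ s_f} (−1)^{#{s<0}} 𝒰^{(0)}(s_i,s,s_f) L_b(s) ds` (entrywise integral). -/
noncomputable def dysonTerm (Hs Ws Os : Matrix (Fin 2) (Fin 2) ℂ) (B : ℝ → ℝ → ℂ)
    (m : ℕ) (si sf : ℝ) : Matrix (Fin 2) (Fin 2) ℂ :=
  Matrix.of fun a c =>
    ∫ s in simplexSet m si sf,
      Complex.I ^ m * (-1 : ℂ) ^ negCount s * Lb B s * (U0 Hs Ws Os (List.ofFn s) si sf) a c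

open scoped Classical in
/-- The full propagator truncated at order `M`. -/
noncomputable def fullPropagator (Hs Ws Os : Matrix (Fin 2) (Fin 2) ℂ) (B : ℝ → ℝ → ℂ)
    (M : ℕ) (si sf : ℝ) : Matrix (Fin 2) (Fin 2) ℂ :=
  Gs0 Hs Os si sf +
    ∑ m ∈ (Finset.range (M + 1)).filter (fun m => Even m ∧ 2 ≤ m),
      dysonTerm Hs Ws Os B m si sf


/-! ### Auxiliary lemmas -/

section Aux

open Matrix

/-- Conjugate symmetry of the bare propagator. -/
lemma gs0_symm (Hs Os : Matrix (Fin 2) (Fin 2) ℂ) (hH : Hs.IsHermitian) (hO : Os.IsHermitian)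
    {si sf : ℝ} (h : si ≤ sf) (hsi : si ≠ 0) (hsf : sf ≠ 0) :
    Gs0 Hs Os (-sf) (-si) = (Gs0 Hs Os si sf)ᴴ := by
  have hsmul : ∀ (c : ℂ), ((c • Hs)ᴴ : Matrix (Fin 2) (Fin 2) ℂ) = (starRingEnd ℂ c) • Hs := by
    intro c; rw [Matrix.conjTranspose_smul, hH.eq]; rfl
  rcases lt_trichotomy sf 0 with hsf0 | hsf0 | hsf0
  · -- sf < 0, so si ≤ sf < 0, -si > 0, 0 ≤ -sf
    have hsi0 : si < 0 := lt_of_le_of_lt h hsf0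
    rw [Gs0, Gs0, if_neg (by push_neg; linarith), if_pos (by linarith), if_pos hsf0,
      ← Matrix.exp_conjTranspose, hsmul]
    congr 2
    push_cast
    simp only [_root_.map_mul, map_neg, Complex.conj_I, map_sub, Complex.conj_ofReal]
    ring
  · exact absurd hsf0 hsf
  · rcases lt_trichotomy si 0 with hsi0 | hsi0 | hsi0
    · -- si < 0 < sf
      rw [Gs0, Gs0, if_neg (by push_neg; linarith), if_neg (by push_neg; linarith),
        if_neg (by push_neg; linarith), if_neg (by push_neg; linarith)]
      rw [Matrix.conjTranspose_mul, Matrix.conjTranspose_mul, ← Matrix.exp_conjTranspose,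
        ← Matrix.exp_conjTranspose, hsmul, hsmul, hO.eq, mul_assoc]
      congr 2
      · congr 1
        push_cast
        simp only [_root_.map_mul, Complex.conj_I, Complex.conj_ofReal]
        ring
      · congr 2
        push_cast
        simp only [_root_.map_mul, Complex.conj_I, Complex.conj_ofReal]
        ring
    · exact absurd hsi0 hsi
    · -- 0 < si ≤ sf
      rw [Gs0, Gs0, if_pos (by linarith), if_neg (by push_neg; linarith), if_pos (by linarith),
        ← Matrix.exp_conjTranspose, hsmul]
      congr 2
      push_cast
      simp only [_root_.map_mul, map_neg, Complex.conj_I, map_sub, Complex.conj_ofReal]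
      ring

lemma u0_append (Hs Ws Os : Matrix (Fin 2) (Fin 2) ℂ) (l : List ℝ) (y lo hi : ℝ) :
    U0 Hs Ws Os (l ++ [y]) lo hi = Gs0 Hs Os y hi * Ws * U0 Hs Ws Os l lo y := by
  induction l generalizing lo with
  | nil => simp [U0]
  | cons x rest ih =>
      rw [List.cons_append, U0, ih, U0]
      simp only [mul_assoc]

/-- Conjugate symmetry of the bare evolution `U0`. -/
lemma u0_symm (Hs Ws Os : Matrix (Fin 2) (Fin 2) ℂ)
    (hH : Hs.IsHermitian) (hW : Ws.IsHermitian) (hO : Os.IsHermitian) :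
    ∀ (l : List ℝ) (lo hi : ℝ), l.Pairwise (·≤·) → (∀ x ∈ l, lo ≤ x ∧ x ≤ hi) →
      lo ≤ hi → lo ≠ 0 → hi ≠ 0 → (∀ x ∈ l, x ≠ 0) →
      U0 Hs Ws Os (l.reverse.map Neg.neg) (-hi) (-lo) = (U0 Hs Ws Os l lo hi)ᴴ := by
  intro l
  induction l with
  | nil =>
      intro lo hi _ _ hle hlo hhi _
      simpa [U0] using gs0_symm Hs Os hH hO hle hlo hhi
  | cons x rest ih =>
      intro lo hi hsort hmem hle hlo hhi hz
      have hxlo : lo ≤ x := (hmem x (List.mem_cons_self)).1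
      have hxhi : x ≤ hi := (hmem x (List.mem_cons_self)).2
      have hxz : x ≠ 0 := hz x (List.mem_cons_self)
      have hrest : rest.Pairwise (·≤·) := hsort.of_cons
      have hxrest : ∀ y ∈ rest, x ≤ y := fun y hy => List.rel_of_pairwise_cons hsort hy
      simp only [List.reverse_cons, List.map_append, List.map_cons, List.map_nil]
      rw [u0_append, U0, Matrix.conjTranspose_mul, Matrix.conjTranspose_mul, hW.eq,
        ← gs0_symm Hs Os hH hO hxlo hlo hxz,
        ← ih x hi hrest (fun y hy => ⟨hxrest y hy, (hmem y (List.mem_cons_of_mem _ hy)).2⟩)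
          hxhi hxz hhi (fun y hy => hz y (List.mem_cons_of_mem _ hy)), mul_assoc]

/-- The reflection of a pair used in the pairing bijection. -/
def pairRev {m : ℕ} (p : Fin m × Fin m) : Fin m × Fin m := (p.2.rev, p.1.rev)

lemma pairRev_invol {m : ℕ} : Function.Involutive (pairRev (m := m)) := by
  intro p; simp [pairRev]

lemma isPairing_image {m : ℕ} {P : Finset (Fin m × Fin m)} (hP : IsPairing P) :
    IsPairing (P.image pairRev) := by
  obtain ⟨h1, h2⟩ := hP
  constructor
  · intro q hq
    obtain ⟨p, hp, rfl⟩ := Finset.mem_image.1 hq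
    simpa [pairRev, Fin.rev_lt_rev] using h1 p hp
  · intro x
    obtain ⟨p, ⟨hpP, hor⟩, huniq⟩ := h2 x.rev
    refine ⟨pairRev p, ⟨Finset.mem_image_of_mem _ hpP, ?_⟩, ?_⟩
    · rcases hor with h | h
      · right; rw [pairRev]; simp [← h]
      · left; rw [pairRev]; simp [← h]
    · rintro q ⟨hq, hor'⟩
      obtain ⟨p', hp', rfl⟩ := Finset.mem_image.1 hq
      have : p' = p := by
        apply huniq
        refine ⟨hp', ?_⟩
        rcases hor' with h | h
        · right; simp [pairRev] at h; rw [h]; simp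
        · left; simp [pairRev] at h; rw [h]; simp
      rw [this]

lemma pairings_map {m : ℕ} {P : Finset (Fin m × Fin m)} :
    P ∈ pairings m → P.image pairRev ∈ pairings m := by
  classical
  intro hP
  simp only [pairings, Finset.mem_filter, Finset.mem_univ, true_and] at *
  exact isPairing_image hP

/-- Conjugate symmetry of the Wick pairing sum. -/
lemma lb_symm {m : ℕ} (B : ℝ → ℝ → ℂ)
    (hB : ∀ si sf : ℝ, si ≤ sf → B (-sf) (-si) = starRingEnd ℂ (B si sf))
    (s : Fin m → ℝ) (hs : Monotone s) :
    Lb B (fun i => -(s i.rev)) = starRingEnd ℂ (Lb B s) := by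
  classical
  rw [Lb, Lb, map_sum]
  refine Finset.sum_nbij' (fun P => P.image pairRev) (fun P => P.image pairRev)
    (fun P hP => pairings_map hP) (fun P hP => pairings_map hP)
    (fun P _ => by
      show (P.image pairRev).image pairRev = P
      rw [Finset.image_image, pairRev_invol.comp_self, Finset.image_id])
    (fun P _ => by
      show (P.image pairRev).image pairRev = P
      rw [Finset.image_image, pairRev_invol.comp_self, Finset.image_id])
    ?_
  intro P hP
  rw [Finset.prod_image (fun a _ b _ h => pairRev_invol.injective h), map_prod]
  refine Finset.prod_congr rfl ?_
  intro p hp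
  have hlt : p.1 < p.2 := by
    simp only [pairings, Finset.mem_filter] at hP
    exact hP.2.1 p hp
  simp only [pairRev, Fin.rev_rev]
  exact hB (s p.2.rev) (s p.1.rev) (hs (Fin.rev_le_rev.2 hlt.le))

/-- The change of variables `s ↦ (i ↦ -s (rev i))` as a measurable equivalence. -/
noncomputable def flipEquiv (m : ℕ) : (Fin m → ℝ) ≃ᵐ (Fin m → ℝ) :=
  (MeasurableEquiv.piCongrLeft (fun _ : Fin m => ℝ) Fin.revPerm).trans
    (MeasurableEquiv.neg _)

lemma flipEquiv_apply {m : ℕ} (s : Fin m → ℝ) (i : Fin m) :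
    flipEquiv m s i = -(s i.rev) := by
  have h := MeasurableEquiv.piCongrLeft_apply_apply (Fin.revPerm (n := m))
    (β := fun _ => ℝ) s i.rev
  simp only [flipEquiv, MeasurableEquiv.trans_apply, MeasurableEquiv.neg_apply, Pi.neg_apply]
  simp only [Fin.revPerm_apply, Fin.rev_rev] at h
  rw [h]

lemma flipEquiv_measurePreserving (m : ℕ) :
    MeasureTheory.MeasurePreserving (flipEquiv m) volume volume :=
  (Measure.measurePreserving_neg _).comp
    (volume_measurePreserving_piCongrLeft (fun _ : Fin m => ℝ) Fin.revPerm)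

lemma flipEquiv_preimage {m : ℕ} (si sf : ℝ) :
    (flipEquiv m) ⁻¹' (simplexSet m (-sf) (-si)) = simplexSet m si sf := by
  ext s
  simp only [Set.mem_preimage, simplexSet, Set.mem_setOf_eq]
  constructor
  · rintro ⟨hmono, hbd⟩
    constructor
    · intro i j hij
      have := hmono (Fin.rev_le_rev.2 hij)
      simp only [flipEquiv_apply, Fin.rev_rev] at this
      linarith
    · intro i
      have := hbd i.rev
      simp only [flipEquiv_apply, Fin.rev_rev] at this
      constructor <;> linarith [this.1, this.2]
  · rintro ⟨hmono, hbd⟩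
    constructor
    · intro i j hij
      simp only [flipEquiv_apply]
      have := hmono (Fin.rev_le_rev.2 hij)
      linarith
    · intro i
      simp only [flipEquiv_apply]
      constructor <;> linarith [(hbd i.rev).1, (hbd i.rev).2]

lemma negCount_flip {m : ℕ} (s : Fin m → ℝ) (hz : ∀ i, s i ≠ 0) :
    negCount (fun i => -(s i.rev)) + negCount s = m := by
  classical
  rw [negCount, negCount]
  have h1 : (Finset.univ.filter fun i : Fin m => -(s i.rev) < 0) =
      (Finset.univ.filter fun i : Fin m => 0 < s i).image Fin.rev := by
    ext i
    simp only [Finset.mem_filter, Finset.mem_univ, true_and, Finset.mem_image]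
    constructor
    · intro h
      exact ⟨i.rev, by simpa using h, by simp⟩
    · rintro ⟨j, hj, rfl⟩
      simpa using hj
  rw [h1, Finset.card_image_of_injective _ Fin.rev_injective]
  have h2 : (Finset.univ.filter fun i : Fin m => 0 < s i) =
      Finset.univ.filter fun i : Fin m => ¬(s i < 0) := by
    refine Finset.filter_congr fun i _ => ?_
    constructor
    · intro h; exact not_lt.2 h.le
    · intro h; exact lt_of_le_of_ne (not_lt.1 h) (Ne.symm (hz i))
  rw [h2, add_comm]
  simpa using Finset.card_filter_add_card_filter_not (s := Finset.univ)
    (p := fun i : Fin m => s i < 0)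

lemma simplexSet_measurable (m : ℕ) (a b : ℝ) : MeasurableSet (simplexSet m a b) := by
  have : simplexSet m a b =
      (⋂ (i : Fin m), ⋂ (j : Fin m), ⋂ (_ : i ≤ j), {s : Fin m → ℝ | s i ≤ s j}) ∩
      ((⋂ (i : Fin m), {s : Fin m → ℝ | a ≤ s i}) ∩ ⋂ (i : Fin m), {s : Fin m → ℝ | s i ≤ b}) := by
    ext s
    simp only [simplexSet, Set.mem_setOf_eq, Set.mem_inter_iff, Set.mem_iInter]
    constructor
    · rintro ⟨hm, hb⟩
      exact ⟨fun i j hij => hm hij, fun i => (hb i).1, fun i => (hb i).2⟩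
    · rintro ⟨hm, hb1, hb2⟩
      exact ⟨fun i j hij => hm i j hij, fun i => ⟨hb1 i, hb2 i⟩⟩
  rw [this]
  refine MeasurableSet.inter ?_ (MeasurableSet.inter ?_ ?_)
  · exact MeasurableSet.iInter fun i => MeasurableSet.iInter fun j =>
      MeasurableSet.iInter fun _ => measurableSet_le (measurable_pi_apply i) (measurable_pi_apply j)
  · exact MeasurableSet.iInter fun i => measurableSet_le measurable_const (measurable_pi_apply i)
  · exact MeasurableSet.iInter fun i => measurableSet_le (measurable_pi_apply i) measurable_const

lemma ae_nonzero (m : ℕ) : ∀ᵐ s : Fin m → ℝ ∂volume, ∀ i, s i ≠ 0 := by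
  rw [MeasureTheory.ae_all_iff]
  intro i
  exact MeasureTheory.compl_mem_ae_iff.2 (MeasureTheory.Measure.pi_hyperplane _ i 0)

lemma ofFn_rev_eq {m : ℕ} (f : Fin m → ℝ) :
    List.ofFn (fun i => -(f i.rev)) = List.map Neg.neg (List.ofFn f).reverse := by
  apply List.ext_getElem
  · simp
  · intro i h1 h2
    simp only [List.getElem_ofFn, List.getElem_map, List.getElem_reverse,
      List.length_ofFn] at *
    congr 2
    ext
    simp [Fin.rev]
    omega

end Aux
/-- Conjugate symmetry: if `B(−s_f,−s_i) = conj B(s_i,s_f)` and `H_s, W_s, O_s` are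
Hermitian, then each Dyson term satisfies
`(term at (−s_f,−s_i)) = (term at (s_i,s_f))†`; in particular the truncated full
propagator satisfies `G(−s_f,−s_i) = G(s_i,s_f)†`. -/
theorem dyson_conjugate_symmetry (Hs Ws Os : Matrix (Fin 2) (Fin 2) ℂ)
    (hH : Hs.IsHermitian) (hW : Ws.IsHermitian) (hO : Os.IsHermitian)
    (B : ℝ → ℝ → ℂ) (hB : ∀ si sf : ℝ, si ≤ sf → B (-sf) (-si) = starRingEnd ℂ (B si sf))
    (si sf : ℝ) (h : si ≤ sf) (hsi : si ≠ 0) (hsf : sf ≠ 0) (M : ℕ) :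
    (∀ m : ℕ, dysonTerm Hs Ws Os B m (-sf) (-si) = (dysonTerm Hs Ws Os B m si sf)ᴴ) ∧
    fullPropagator Hs Ws Os B M (-sf) (-si) = (fullPropagator Hs Ws Os B M si sf)ᴴ := by
  have hterm : ∀ m : ℕ, dysonTerm Hs Ws Os B m (-sf) (-si) = (dysonTerm Hs Ws Os B m si sf)ᴴ := by
    intro m
    ext a c
    simp only [dysonTerm, Matrix.conjTranspose_apply, Matrix.of_apply]
    rw [← starRingEnd_apply, ← integral_conj]
    rw [← ((flipEquiv_measurePreserving m).setIntegral_preimage_emb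
      (MeasurableEquiv.measurableEmbedding _) _ _), flipEquiv_preimage si sf]
    refine MeasureTheory.setIntegral_congr_ae (simplexSet_measurable m si sf) ?_
    filter_upwards [ae_nonzero m] with s hz hmem
    obtain ⟨hmono, hbd⟩ := hmem
    have hts : flipEquiv m s = fun i => -(s i.rev) := funext (flipEquiv_apply s)
    rw [hts]
    have hLb := lb_symm B hB s hmono
    have hofn : List.ofFn (fun i => -(s i.rev)) = (List.ofFn s).reverse.map Neg.neg := by
      exact ofFn_rev_eq s
    have hU : U0 Hs Ws Os (List.ofFn fun i => -(s i.rev)) (-sf) (-si)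
        = (U0 Hs Ws Os (List.ofFn s) si sf)ᴴ := by
      rw [hofn]
      refine u0_symm Hs Ws Os hH hW hO _ si sf (List.sortedLE_iff_pairwise.1 (List.sortedLE_ofFn_iff.2 hmono)) ?_ h hsi hsf ?_
      · intro x hx
        obtain ⟨i, rfl⟩ := List.mem_ofFn.1 hx
        exact hbd i
      · intro x hx
        obtain ⟨i, rfl⟩ := List.mem_ofFn.1 hx
        exact hz i
    have hneg := negCount_flip s hz
    have h2 : (-1 : ℂ) ^ negCount s * (-1 : ℂ) ^ negCount s = 1 := by
      rw [← pow_add]; exact Even.neg_one_pow ⟨_, rfl⟩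
    have key2 : Complex.I ^ m * (-1 : ℂ) ^ negCount (fun i => -(s i.rev)) =
        starRingEnd ℂ (Complex.I ^ m) * starRingEnd ℂ ((-1 : ℂ) ^ negCount s) := by
      have hc1 : starRingEnd ℂ (Complex.I ^ m) = (-1 : ℂ) ^ m * Complex.I ^ m := by
        rw [map_pow, Complex.conj_I, neg_pow Complex.I m]
      have hc2 : starRingEnd ℂ ((-1 : ℂ) ^ negCount s) = (-1 : ℂ) ^ negCount s := by simp
      have hpow : (-1 : ℂ) ^ m =
          (-1 : ℂ) ^ negCount (fun i => -(s i.rev)) * (-1 : ℂ) ^ negCount s := by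
        rw [← pow_add, hneg]
      rw [hc1, hc2, hpow]
      linear_combination (-(Complex.I ^ m * ((-1 : ℂ) ^ negCount (fun i => -(s i.rev))))) * h2
    rw [hLb, hU, Matrix.conjTranspose_apply, _root_.map_mul, _root_.map_mul, _root_.map_mul,
      key2]
    simp only [starRingEnd_apply]
  refine ⟨hterm, ?_⟩
  rw [fullPropagator, fullPropagator, Matrix.conjTranspose_add, Matrix.conjTranspose_sum]
  rw [gs0_symm Hs Os hH hO h hsi hsf]
  exact congrArg _ (Finset.sum_congr rfl fun m _ => hterm m)
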